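/- There is a bijection between (a) pairs ((σ_1,...,σ_{n−1}), (λ_1,...,λ_{n−1})) where (σ_i) is a sequence of successive block-pair merges reducing the discrete partition of [n] to the one-block partition and each λ_i is an edge {x,y} with x and y in the two different blocks of σ_i, and (b) pairs (τ, φ_τ) of a tree τ on vertex set [n] together with a bijective labeling φ_τ : E_τ → [n−1] of its n−1 edges. -/
import Mathlib


open scoped Classical

/-- The sequence of partitions obtained from the discrete partition of `[n]` by
successively merging, at step `k+1`, the pair of blocks `sig k` (so `mergeParts n sig k`
is the partition `γ_k` after `k` merges). -/
def mergeParts (n : ℕ) (sig : Fin (n - 1) → Finset (Fin n) × Finset (Fin n)) :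
    ℕ → Finset (Finset (Fin n))
  | 0 => (Finset.univ : Finset (Fin n)).image (fun i => ({i} : Finset (Fin n)))
  | k + 1 =>
    if h : k < n - 1 then
      insert ((sig ⟨k, h⟩).1 ∪ (sig ⟨k, h⟩).2)
        (((mergeParts n sig k).erase (sig ⟨k, h⟩).1).erase (sig ⟨k, h⟩).2)
    else mergeParts n sig k

/-- A pair `((σ_1,…,σ_{n−1}), (λ_1,…,λ_{n−1}))` where `σ_{k+1} = sig k` is an unordered
pair of distinct blocks of `γ_k` (represented as an ordered pair, normalized by the
condition `(lam k).1 < (lam k).2`), and `λ_{k+1} = lam k` is an edge with one endpoint in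
each of the two blocks of `σ_{k+1}`. -/
structure MergeEdgeSeq (n : ℕ) where
  sig : Fin (n - 1) → Finset (Fin n) × Finset (Fin n)
  lam : Fin (n - 1) → Fin n × Fin n
  mem1 : ∀ k : Fin (n - 1), (sig k).1 ∈ mergeParts n sig (k : ℕ)
  mem2 : ∀ k : Fin (n - 1), (sig k).2 ∈ mergeParts n sig (k : ℕ)
  ne : ∀ k : Fin (n - 1), (sig k).1 ≠ (sig k).2
  lam1 : ∀ k : Fin (n - 1), (lam k).1 ∈ (sig k).1
  lam2 : ∀ k : Fin (n - 1), (lam k).2 ∈ (sig k).2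
  ord : ∀ k : Fin (n - 1), (lam k).1 < (lam k).2

/-- A tree on vertex set `[n]` together with a bijective labeling of its `n − 1` edges by
`1, …, n−1`: equivalently, an injective list of `n − 1` non-diagonal edges whose union is
a connected (hence tree) graph on `[n]`. -/
structure LabeledTree (n : ℕ) where
  edge : Fin (n - 1) → Sym2 (Fin n)
  inj : Function.Injective edge
  nondiag : ∀ i, ¬ (edge i).IsDiag
  conn : (SimpleGraph.fromEdgeSet (Set.range edge)).Connected


namespace Stmt10
open Finset SimpleGraph

variable {n : ℕ}

/-- ordered endpoints of an edge -/
noncomputable def epair (e : Sym2 (Fin n)) : Fin n × Fin n :=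
  Sym2.lift ⟨fun a b => (min a b, max a b), by intro a b; simp [min_comm, max_comm]⟩ e

@[simp] lemma epair_mk (a b : Fin n) : epair s(a, b) = (min a b, max a b) := rfl

lemma mk_epair (e : Sym2 (Fin n)) : s((epair e).1, (epair e).2) = e := by
  induction e using Sym2.ind with
  | _ a b =>
    rcases le_total a b with h | h
    · simp [min_eq_left h, max_eq_right h]
    · simp only [epair_mk, min_eq_right h, max_eq_left h]
      exact (Sym2.eq_swap)

noncomputable def gUp (E : Fin (n - 1) → Sym2 (Fin n)) (k : ℕ) : SimpleGraph (Fin n) :=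
  SimpleGraph.fromEdgeSet {e | ∃ i : Fin (n - 1), (i : ℕ) < k ∧ E i = e}

noncomputable def cpt (G : SimpleGraph (Fin n)) (v : Fin n) : Finset (Fin n) :=
  Finset.univ.filter fun w => G.Reachable v w

lemma mem_cpt {G : SimpleGraph (Fin n)} {v w : Fin n} :
    w ∈ cpt G v ↔ G.Reachable v w := by simp [cpt]

lemma self_mem_cpt (G : SimpleGraph (Fin n)) (v : Fin n) : v ∈ cpt G v :=
  mem_cpt.2 (Reachable.refl v)

lemma cpt_eq_cpt {G : SimpleGraph (Fin n)} {v w : Fin n} (h : G.Reachable v w) :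
    cpt G v = cpt G w := by
  ext x
  simp only [mem_cpt]
  exact ⟨fun hx => h.symm.trans hx, fun hx => h.trans hx⟩

lemma reach_of_cpt_eq {G : SimpleGraph (Fin n)} {v w : Fin n} (h : cpt G v = cpt G w) :
    G.Reachable v w := by
  have := self_mem_cpt G w
  rw [← h, mem_cpt] at this
  exact this

lemma cpt_eq_of_mem {G : SimpleGraph (Fin n)} {B : Finset (Fin n)} {x : Fin n}
    (hB : B ∈ Finset.univ.image (cpt G)) (hx : x ∈ B) : B = cpt G x := by
  obtain ⟨w, -, rfl⟩ := Finset.mem_image.1 hB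
  exact cpt_eq_cpt (mem_cpt.1 hx)

lemma reachable_sup_edge {G : SimpleGraph (Fin n)} {a b : Fin n} (hab : a ≠ b) (u v : Fin n) :
    (G ⊔ SimpleGraph.fromEdgeSet {s(a, b)}).Reachable u v ↔
      G.Reachable u v ∨ (G.Reachable u a ∧ G.Reachable b v) ∨
        (G.Reachable u b ∧ G.Reachable a v) := by
  have hadj : (G ⊔ SimpleGraph.fromEdgeSet {s(a, b)}).Adj a b := by
    right; exact (fromEdgeSet_adj _).2 ⟨rfl, hab⟩
  constructor
  · rintro ⟨w⟩
    induction w with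
    | nil => exact Or.inl (Reachable.refl _)
    | @cons u x v h p ih =>
      rcases h with h | h
      · have hux : G.Reachable u x := h.reachable
        rcases ih with h1 | ⟨h1, h2⟩ | ⟨h1, h2⟩
        · exact Or.inl (hux.trans h1)
        · exact Or.inr (Or.inl ⟨hux.trans h1, h2⟩)
        · exact Or.inr (Or.inr ⟨hux.trans h1, h2⟩)
      · rw [fromEdgeSet_adj, Set.mem_singleton_iff, Sym2.eq_iff] at h
        rcases h.1 with ⟨rfl, rfl⟩ | ⟨rfl, rfl⟩
        · rcases ih with h1 | ⟨h1, h2⟩ | ⟨h1, h2⟩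
          · exact Or.inr (Or.inl ⟨Reachable.refl _, h1⟩)
          · exact Or.inr (Or.inl ⟨Reachable.refl _, h2⟩)
          · exact Or.inl h2
        · rcases ih with h1 | ⟨h1, h2⟩ | ⟨h1, h2⟩
          · exact Or.inr (Or.inr ⟨Reachable.refl _, h1⟩)
          · exact Or.inl h2
          · exact Or.inr (Or.inr ⟨Reachable.refl _, h2⟩)
  · rintro (h | ⟨h1, h2⟩ | ⟨h1, h2⟩)
    · exact h.mono le_sup_left
    · exact ((h1.mono le_sup_left).trans hadj.reachable).trans (h2.mono le_sup_left)
    · exact ((h1.mono le_sup_left).trans hadj.symm.reachable).trans (h2.mono le_sup_left)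




 

variable {n : ℕ}

section
variable {G : SimpleGraph (Fin n)} {a b : Fin n}

lemma cpt_sup_edge_left (hnr : ¬ G.Reachable a b) {v : Fin n} (hv : G.Reachable v a) :
    cpt (G ⊔ SimpleGraph.fromEdgeSet {s(a, b)}) v = cpt G a ∪ cpt G b := by
  have hab : a ≠ b := fun h => hnr (h ▸ Reachable.refl a)
  ext w
  rw [Finset.mem_union, mem_cpt, mem_cpt, mem_cpt, reachable_sup_edge hab]
  constructor
  · rintro (h | ⟨-, h⟩ | ⟨-, h⟩)
    · exact Or.inl (hv.symm.trans h)
    · exact Or.inr h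
    · exact Or.inl h
  · rintro (h | h)
    · exact Or.inl (hv.trans h)
    · exact Or.inr (Or.inl ⟨hv, h⟩)

lemma cpt_sup_edge_right (hnr : ¬ G.Reachable a b) {v : Fin n} (hv : G.Reachable v b) :
    cpt (G ⊔ SimpleGraph.fromEdgeSet {s(a, b)}) v = cpt G a ∪ cpt G b := by
  have h' : ¬ G.Reachable b a := fun h => hnr h.symm
  have := cpt_sup_edge_left h' hv
  rw [Sym2.eq_swap] at this
  rw [this, Finset.union_comm]

lemma cpt_sup_edge_not (hab : a ≠ b) {v : Fin n} (hva : ¬ G.Reachable v a)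
    (hvb : ¬ G.Reachable v b) :
    cpt (G ⊔ SimpleGraph.fromEdgeSet {s(a, b)}) v = cpt G v := by
  ext w
  rw [mem_cpt, mem_cpt, reachable_sup_edge hab]
  constructor
  · rintro (h | ⟨h, -⟩ | ⟨h, -⟩)
    · exact h
    · exact absurd h hva
    · exact absurd h hvb
  · exact fun h => Or.inl h

lemma image_cpt_sup_edge (hnr : ¬ G.Reachable a b) :
    Finset.univ.image (cpt (G ⊔ SimpleGraph.fromEdgeSet {s(a, b)})) =
      insert (cpt G a ∪ cpt G b)
        (((Finset.univ.image (cpt G)).erase (cpt G a)).erase (cpt G b)) := by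
  have hab : a ≠ b := fun h => hnr (h ▸ Reachable.refl a)
  ext S
  constructor
  · intro hS
    obtain ⟨v, -, rfl⟩ := Finset.mem_image.1 hS
    by_cases hva : G.Reachable v a
    · rw [cpt_sup_edge_left hnr hva]; exact Finset.mem_insert_self _ _
    by_cases hvb : G.Reachable v b
    · rw [cpt_sup_edge_right hnr hvb]; exact Finset.mem_insert_self _ _
    · rw [cpt_sup_edge_not hab hva hvb]
      refine Finset.mem_insert_of_mem (Finset.mem_erase.2 ⟨?_, Finset.mem_erase.2 ⟨?_, ?_⟩⟩)
      · intro h; exact hvb (mem_cpt.1 (h ▸ self_mem_cpt G b))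
      · intro h; exact hva (mem_cpt.1 (h ▸ self_mem_cpt G a))
      · exact Finset.mem_image_of_mem _ (Finset.mem_univ v)
  · intro hS
    rcases Finset.mem_insert.1 hS with rfl | hS
    · rw [← cpt_sup_edge_left hnr (Reachable.refl a)]
      exact Finset.mem_image_of_mem _ (Finset.mem_univ a)
    · obtain ⟨hSb, hS'⟩ := Finset.mem_erase.1 hS
      obtain ⟨hSa, hS''⟩ := Finset.mem_erase.1 hS'
      obtain ⟨v, -, rfl⟩ := Finset.mem_image.1 hS''
      have hva : ¬ G.Reachable v a := fun h => hSa (cpt_eq_cpt h)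
      have hvb : ¬ G.Reachable v b := fun h => hSb (cpt_eq_cpt h)
      rw [← cpt_sup_edge_not hab hva hvb]
      exact Finset.mem_image_of_mem _ (Finset.mem_univ v)

lemma cpt_sup_edge_reach (hab : a ≠ b) (hr : G.Reachable a b) :
    cpt (G ⊔ SimpleGraph.fromEdgeSet {s(a, b)}) = cpt G := by
  funext v
  ext w
  rw [mem_cpt, mem_cpt, reachable_sup_edge hab]
  constructor
  · rintro (h | ⟨h1, h2⟩ | ⟨h1, h2⟩)
    · exact h
    · exact (h1.trans hr).trans h2
    · exact (h1.trans hr.symm).trans h2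
  · exact fun h => Or.inl h

end


section GUp

variable {E : Fin (n - 1) → Sym2 (Fin n)}

lemma gUp_zero (E : Fin (n - 1) → Sym2 (Fin n)) : gUp E 0 = ⊥ := by
  rw [gUp]
  convert SimpleGraph.fromEdgeSet_empty
  ext e
  simp

lemma gUp_succ (E : Fin (n - 1) → Sym2 (Fin n)) {k : ℕ} (h : k < n - 1) :
    gUp E (k + 1) = gUp E k ⊔ SimpleGraph.fromEdgeSet {E ⟨k, h⟩} := by
  rw [gUp, gUp, ← SimpleGraph.fromEdgeSet_union]
  congr 1
  ext e
  simp only [Set.mem_setOf_eq, Set.mem_union, Set.mem_singleton_iff]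
  constructor
  · rintro ⟨i, hi, rfl⟩
    rcases Nat.lt_succ_iff_lt_or_eq.1 hi with hi' | hi'
    · exact Or.inl ⟨i, hi', rfl⟩
    · right; congr; exact Fin.ext hi'
  · rintro (⟨i, hi, rfl⟩ | rfl)
    · exact ⟨i, Nat.lt_succ_of_lt hi, rfl⟩
    · exact ⟨⟨k, h⟩, Nat.lt_succ_self _, rfl⟩

lemma gUp_mono {j k : ℕ} (h : j ≤ k) : gUp E j ≤ gUp E k := by
  apply SimpleGraph.fromEdgeSet_mono
  rintro e ⟨i, hi, rfl⟩
  exact ⟨i, lt_of_lt_of_le hi h, rfl⟩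

lemma gUp_last (E : Fin (n - 1) → Sym2 (Fin n)) :
    gUp E (n - 1) = SimpleGraph.fromEdgeSet (Set.range E) := by
  rw [gUp]
  congr 1
  ext e
  simp only [Set.mem_setOf_eq, Set.mem_range]
  exact ⟨fun ⟨i, _, hi⟩ => ⟨i, hi⟩, fun ⟨i, hi⟩ => ⟨i, i.isLt, hi⟩⟩

lemma cpt_bot (v : Fin n) : cpt (⊥ : SimpleGraph (Fin n)) v = {v} := by
  ext w
  rw [mem_cpt, SimpleGraph.reachable_bot, Finset.mem_singleton]
  exact eq_comm

lemma image_cpt_gUp_zero (E : Fin (n - 1) → Sym2 (Fin n)) :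
    Finset.univ.image (cpt (gUp E 0)) =
      (Finset.univ : Finset (Fin n)).image (fun i => ({i} : Finset (Fin n))) := by
  rw [gUp_zero]
  congr 1
  funext v
  exact cpt_bot v

end GUp

/-- Number of components after `k` edges. -/
noncomputable def nc (E : Fin (n - 1) → Sym2 (Fin n)) (k : ℕ) : ℕ :=
  (Finset.univ.image (cpt (gUp E k))).card

lemma nc_zero (E : Fin (n - 1) → Sym2 (Fin n)) : nc E 0 = n := by
  rw [nc, image_cpt_gUp_zero, Finset.card_image_of_injective _ Finset.singleton_injective,
    Finset.card_univ, Fintype.card_fin]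

lemma nc_succ_ge (T : LabeledTree n) {k : ℕ} (h : k < n - 1) :
    nc T.edge k ≤ nc T.edge (k + 1) + 1 := by
  obtain ⟨a, b, hab⟩ : ∃ a b : Fin n, T.edge ⟨k, h⟩ = s(a, b) := by
    induction T.edge ⟨k, h⟩ using Sym2.ind with
    | _ x y => exact ⟨x, y, rfl⟩
  have hne : a ≠ b := by
    intro hEq
    exact T.nondiag ⟨k, h⟩ (by rw [hab, hEq]; exact Sym2.mk_isDiag_iff.2 rfl)
  rw [nc, nc, gUp_succ T.edge h, hab]
  by_cases hr : (gUp T.edge k).Reachable a b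
  · rw [cpt_sup_edge_reach hne hr]; omega
  · rw [image_cpt_sup_edge hr]
    have hamem : cpt (gUp T.edge k) a ∈ Finset.univ.image (cpt (gUp T.edge k)) :=
      Finset.mem_image_of_mem _ (Finset.mem_univ a)
    have hbne : cpt (gUp T.edge k) b ≠ cpt (gUp T.edge k) a :=
      fun hEq => hr (reach_of_cpt_eq hEq).symm
    have hbmem : cpt (gUp T.edge k) b ∈
        (Finset.univ.image (cpt (gUp T.edge k))).erase (cpt (gUp T.edge k) a) :=
      Finset.mem_erase.2 ⟨hbne, Finset.mem_image_of_mem _ (Finset.mem_univ b)⟩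
    have hU : cpt (gUp T.edge k) a ∪ cpt (gUp T.edge k) b ∉
        ((Finset.univ.image (cpt (gUp T.edge k))).erase (cpt (gUp T.edge k) a)).erase
          (cpt (gUp T.edge k) b) := by
      intro hmem
      have hPmem : cpt (gUp T.edge k) a ∪ cpt (gUp T.edge k) b ∈
          Finset.univ.image (cpt (gUp T.edge k)) :=
        (Finset.erase_subset _ _) ((Finset.erase_subset _ _) hmem)
      have hCa : cpt (gUp T.edge k) a ∪ cpt (gUp T.edge k) b = cpt (gUp T.edge k) a :=
        cpt_eq_of_mem hPmem (Finset.mem_union_left _ (self_mem_cpt _ a))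
      exact (Finset.mem_erase.1 (Finset.mem_erase.1 hmem).2).1 hCa
    rw [Finset.card_insert_of_notMem hU, Finset.card_erase_of_mem hbmem,
      Finset.card_erase_of_mem hamem]
    omega

lemma nc_le_step (T : LabeledTree n) {j k : ℕ} (hjk : j ≤ k) (hk : k ≤ n - 1) :
    nc T.edge j ≤ nc T.edge k + (k - j) := by
  induction k with
  | zero => simpa [Nat.le_zero.1 hjk]
  | succ k ih =>
    rcases Nat.le_succ_iff_eq_or_le.mp hjk with rfl | hjk'
    · simp
    · have hk' : k < n - 1 := hk
      have h1 := ih hjk' (le_of_lt hk')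
      have h2 := nc_succ_ge T hk'
      omega

lemma nc_last (T : LabeledTree n) : nc T.edge (n - 1) = 1 := by
  have hconn := T.conn
  rw [← gUp_last] at hconn
  have hne : Nonempty (Fin n) := hconn.nonempty
  obtain ⟨v⟩ := hne
  rw [nc]
  rw [Finset.card_eq_one]
  refine ⟨cpt (gUp T.edge (n - 1)) v, ?_⟩
  ext S
  rw [Finset.mem_image, Finset.mem_singleton]
  constructor
  · rintro ⟨w, -, rfl⟩
    exact (cpt_eq_cpt (hconn.preconnected v w)).symm
  · rintro rfl
    exact ⟨v, Finset.mem_univ v, rfl⟩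

/-- In a labeled tree, the endpoints of each edge are not connected by the earlier edges. -/
lemma not_reach_of_tree (T : LabeledTree n) (i : Fin (n - 1)) {a b : Fin n}
    (hab : T.edge i = s(a, b)) : ¬ (gUp T.edge (i : ℕ)).Reachable a b := by
  intro hr
  have hne : a ≠ b := by
    intro hEq
    exact T.nondiag i (by rw [hab, hEq]; exact Sym2.mk_isDiag_iff.2 rfl)
  have hi : (i : ℕ) < n - 1 := i.isLt
  have heq : nc T.edge ((i : ℕ) + 1) = nc T.edge (i : ℕ) := by
    rw [nc, nc, gUp_succ T.edge hi]
    have : T.edge ⟨(i : ℕ), hi⟩ = s(a, b) := by rw [Fin.eta]; exact hab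
    rw [this, cpt_sup_edge_reach hne hr]
  have h0 := nc_zero T.edge
  have h1 : nc T.edge 0 ≤ nc T.edge (i : ℕ) + ((i : ℕ) - 0) :=
    nc_le_step T (Nat.zero_le _) (le_of_lt hi)
  have h2 : nc T.edge ((i : ℕ) + 1) ≤ nc T.edge (n - 1) + (n - 1 - ((i : ℕ) + 1)) :=
    nc_le_step T hi (le_refl _)
  have h3 := nc_last T
  have hn : 1 ≤ n := by
    have : Nonempty (Fin n) := T.conn.nonempty
    obtain ⟨v⟩ := this
    omega
  omega


/-- The edge labelling associated to a merge sequence. -/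
noncomputable def mEdges (m : MergeEdgeSeq n) : Fin (n - 1) → Sym2 (Fin n) :=
  fun i => s((m.lam i).1, (m.lam i).2)

lemma mergeParts_eq_image (m : MergeEdgeSeq n) :
    ∀ k : ℕ, k ≤ n - 1 →
      mergeParts n m.sig k = Finset.univ.image (cpt (gUp (mEdges m) k)) := by
  intro k
  induction k with
  | zero => intro _; rw [mergeParts]; exact (image_cpt_gUp_zero _).symm
  | succ k ih =>
    intro hk1
    have h : k < n - 1 := hk1
    have ihk := ih (le_of_lt h)
    have hmem1 := m.mem1 ⟨k, h⟩
    have hmem2 := m.mem2 ⟨k, h⟩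
    simp only [Fin.val_mk] at hmem1 hmem2
    rw [ihk] at hmem1 hmem2
    have hσ1 : (m.sig ⟨k, h⟩).1 = cpt (gUp (mEdges m) k) (m.lam ⟨k, h⟩).1 :=
      cpt_eq_of_mem hmem1 (m.lam1 ⟨k, h⟩)
    have hσ2 : (m.sig ⟨k, h⟩).2 = cpt (gUp (mEdges m) k) (m.lam ⟨k, h⟩).2 :=
      cpt_eq_of_mem hmem2 (m.lam2 ⟨k, h⟩)
    have hnr : ¬ (gUp (mEdges m) k).Reachable (m.lam ⟨k, h⟩).1 (m.lam ⟨k, h⟩).2 := by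
      intro hr
      exact m.ne ⟨k, h⟩ (by rw [hσ1, hσ2]; exact cpt_eq_cpt hr)
    rw [mergeParts, dif_pos h, gUp_succ (mEdges m) h,
      show mEdges m ⟨k, h⟩ = s((m.lam ⟨k, h⟩).1, (m.lam ⟨k, h⟩).2) from rfl,
      image_cpt_sup_edge hnr, ihk, hσ1, hσ2]

lemma sig_eq_cpt (m : MergeEdgeSeq n) (k : Fin (n - 1)) :
    (m.sig k).1 = cpt (gUp (mEdges m) (k : ℕ)) (m.lam k).1 ∧
      (m.sig k).2 = cpt (gUp (mEdges m) (k : ℕ)) (m.lam k).2 := by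
  have hmem1 := m.mem1 k
  have hmem2 := m.mem2 k
  rw [mergeParts_eq_image m _ (le_of_lt k.isLt)] at hmem1 hmem2
  exact ⟨cpt_eq_of_mem hmem1 (m.lam1 k), cpt_eq_of_mem hmem2 (m.lam2 k)⟩

lemma card_mergeParts (m : MergeEdgeSeq n) :
    ∀ k : ℕ, k ≤ n - 1 → (mergeParts n m.sig k).card + k = n := by
  intro k
  induction k with
  | zero =>
    intro _
    rw [mergeParts, Finset.card_image_of_injective _ Finset.singleton_injective,
      Finset.card_univ, Fintype.card_fin]
    omega
  | succ k ih =>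
    intro hk1
    have h : k < n - 1 := hk1
    have ihk := ih (le_of_lt h)
    have hmem1 := m.mem1 ⟨k, h⟩
    have hmem2 := m.mem2 ⟨k, h⟩
    simp only [Fin.val_mk] at hmem1 hmem2
    have hne := m.ne ⟨k, h⟩
    have hbmem : (m.sig ⟨k, h⟩).2 ∈ (mergeParts n m.sig k).erase (m.sig ⟨k, h⟩).1 :=
      Finset.mem_erase.2 ⟨Ne.symm hne, hmem2⟩
    have hU : (m.sig ⟨k, h⟩).1 ∪ (m.sig ⟨k, h⟩).2 ∉
        ((mergeParts n m.sig k).erase (m.sig ⟨k, h⟩).1).erase (m.sig ⟨k, h⟩).2 := by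
      intro hmemU
      have hPmem : (m.sig ⟨k, h⟩).1 ∪ (m.sig ⟨k, h⟩).2 ∈ mergeParts n m.sig k :=
        (Finset.erase_subset _ _) ((Finset.erase_subset _ _) hmemU)
      rw [mergeParts_eq_image m k (le_of_lt h)] at hPmem
      have h1 : (m.sig ⟨k, h⟩).1 ∪ (m.sig ⟨k, h⟩).2 = cpt (gUp (mEdges m) k) (m.lam ⟨k, h⟩).1 :=
        cpt_eq_of_mem hPmem (Finset.mem_union_left _ (m.lam1 ⟨k, h⟩))
      have h2 := (sig_eq_cpt m ⟨k, h⟩).1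
      simp only [Fin.val_mk] at h2
      exact (Finset.mem_erase.1 (Finset.mem_erase.1 hmemU).2).1 (h1.trans h2.symm)
    have h2card : 2 ≤ (mergeParts n m.sig k).card :=
      Finset.one_lt_card.2 ⟨_, hmem1, _, hmem2, hne⟩
    rw [mergeParts, dif_pos h, Finset.card_insert_of_notMem hU,
      Finset.card_erase_of_mem hbmem, Finset.card_erase_of_mem hmem1]
    omega

lemma reach_lam (m : MergeEdgeSeq n) (i : Fin (n - 1)) {j : ℕ} (hij : (i : ℕ) < j)
    (hj : j ≤ n - 1) :
    (gUp (mEdges m) j).Reachable (m.lam i).1 (m.lam i).2 := by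
  have hU : (m.sig i).1 ∪ (m.sig i).2 ∈ mergeParts n m.sig ((i : ℕ) + 1) := by
    rw [mergeParts, dif_pos i.isLt]
    simp only [Fin.eta]
    exact Finset.mem_insert_self _ _
  have hi1 : (i : ℕ) + 1 ≤ n - 1 := i.isLt
  rw [mergeParts_eq_image m _ hi1] at hU
  have h1 : (m.sig i).1 ∪ (m.sig i).2 = cpt (gUp (mEdges m) ((i : ℕ) + 1)) (m.lam i).1 :=
    cpt_eq_of_mem hU (Finset.mem_union_left _ (m.lam1 i))
  have h2 : (m.lam i).2 ∈ cpt (gUp (mEdges m) ((i : ℕ) + 1)) (m.lam i).1 := by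
    rw [← h1]; exact Finset.mem_union_right _ (m.lam2 i)
  exact (mem_cpt.1 h2).mono (gUp_mono hij)

lemma mEdges_ne (m : MergeEdgeSeq n) {i j : Fin (n - 1)} (hij : i < j) :
    mEdges m i ≠ mEdges m j := by
  intro hEq
  have hreach := reach_lam m i (show (i : ℕ) < (j : ℕ) from hij) (le_of_lt j.isLt)
  rcases Sym2.eq_iff.1 hEq with ⟨h1, h2⟩ | ⟨h1, h2⟩
  · rw [h1, h2] at hreach
    have hσ := sig_eq_cpt m j
    exact m.ne j ((hσ.1.trans (cpt_eq_cpt hreach)).trans hσ.2.symm)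
  · have o1 := m.ord i
    have o2 := m.ord j
    rw [h1, h2] at o1
    exact lt_asymm o1 o2

noncomputable def fFun (hn : 1 ≤ n) (m : MergeEdgeSeq n) : LabeledTree n where
  edge := mEdges m
  inj := by
    intro i j hEq
    rcases lt_trichotomy i j with h | h | h
    · exact absurd hEq (mEdges_ne m h)
    · exact h
    · exact absurd hEq.symm (mEdges_ne m h)
  nondiag := fun i => by
    rw [mEdges, Sym2.mk_isDiag_iff]
    exact ne_of_lt (m.ord i)
  conn := by
    rw [show Set.range (mEdges m) = Set.range (mEdges m) from rfl, ← gUp_last]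
    have hcard := card_mergeParts m (n - 1) le_rfl
    rw [mergeParts_eq_image m (n - 1) le_rfl] at hcard
    have h1 : (Finset.univ.image (cpt (gUp (mEdges m) (n - 1)))).card = 1 := by omega
    obtain ⟨S, hS⟩ := Finset.card_eq_one.1 h1
    rw [SimpleGraph.connected_iff]
    refine ⟨?_, Fin.pos_iff_nonempty.1 hn⟩
    intro u v
    have hu : cpt (gUp (mEdges m) (n - 1)) u ∈ ({S} : Finset (Finset (Fin n))) := by
      rw [← hS]; exact Finset.mem_image_of_mem _ (Finset.mem_univ u)
    have hv : cpt (gUp (mEdges m) (n - 1)) v ∈ ({S} : Finset (Finset (Fin n))) := by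
      rw [← hS]; exact Finset.mem_image_of_mem _ (Finset.mem_univ v)
    exact reach_of_cpt_eq ((Finset.mem_singleton.1 hu).trans (Finset.mem_singleton.1 hv).symm)

/-- The merge-pair sequence associated to a labeled tree. -/
noncomputable def sigT (T : LabeledTree n) (k : Fin (n - 1)) :
    Finset (Fin n) × Finset (Fin n) :=
  (cpt (gUp T.edge (k : ℕ)) (epair (T.edge k)).1, cpt (gUp T.edge (k : ℕ)) (epair (T.edge k)).2)

lemma mergeParts_sigT (T : LabeledTree n) :
    ∀ k : ℕ, k ≤ n - 1 →
      mergeParts n (sigT T) k = Finset.univ.image (cpt (gUp T.edge k)) := by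
  intro k
  induction k with
  | zero => intro _; rw [mergeParts]; exact (image_cpt_gUp_zero _).symm
  | succ k ih =>
    intro hk1
    have h : k < n - 1 := hk1
    have hedge : T.edge ⟨k, h⟩ =
        s((epair (T.edge ⟨k, h⟩)).1, (epair (T.edge ⟨k, h⟩)).2) := (mk_epair _).symm
    have hnr : ¬ (gUp T.edge k).Reachable (epair (T.edge ⟨k, h⟩)).1
        (epair (T.edge ⟨k, h⟩)).2 := by
      have := not_reach_of_tree T ⟨k, h⟩ hedge
      simpa using this
    rw [mergeParts, dif_pos h]
    conv_rhs => rw [gUp_succ T.edge h, hedge]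
    rw [image_cpt_sup_edge hnr, ih (le_of_lt h)]
    rfl

lemma epair_fst_le (e : Sym2 (Fin n)) : (epair e).1 ≤ (epair e).2 := by
  induction e using Sym2.ind with
  | _ a b => simp only [epair_mk]; exact min_le_max

noncomputable def gFun (T : LabeledTree n) : MergeEdgeSeq n where
  sig := sigT T
  lam k := epair (T.edge k)
  mem1 k := by
    rw [mergeParts_sigT T _ (le_of_lt k.isLt)]
    exact Finset.mem_image_of_mem _ (Finset.mem_univ (epair (T.edge k)).1)
  mem2 k := by
    rw [mergeParts_sigT T _ (le_of_lt k.isLt)]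
    exact Finset.mem_image_of_mem _ (Finset.mem_univ (epair (T.edge k)).2)
  ne k := by
    intro hEq
    exact not_reach_of_tree T k (mk_epair (T.edge k)).symm (reach_of_cpt_eq hEq)
  lam1 k := self_mem_cpt _ _
  lam2 k := self_mem_cpt _ _
  ord k := by
    have hne : (epair (T.edge k)).1 ≠ (epair (T.edge k)).2 := by
      intro hEq
      apply T.nondiag k
      rw [← mk_epair (T.edge k), hEq]
      exact Sym2.mk_isDiag_iff.2 rfl
    exact lt_of_le_of_ne (epair_fst_le _) hne

lemma MergeEdgeSeq.ext' {m m' : MergeEdgeSeq n} (h1 : m.sig = m'.sig)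
    (h2 : m.lam = m'.lam) : m = m' := by
  cases m; cases m'
  simp only at h1 h2
  subst h1; subst h2
  rfl

lemma LabeledTree.ext' {T T' : LabeledTree n} (h : T.edge = T'.edge) : T = T' := by
  cases T; cases T'
  simp only at h
  subst h
  rfl

lemma left_inv (hn : 1 ≤ n) (m : MergeEdgeSeq n) : gFun (fFun hn m) = m := by
  have hep : ∀ k : Fin (n - 1), epair ((fFun hn m).edge k) = m.lam k := by
    intro k
    show epair (mEdges m k) = m.lam k
    rw [mEdges, epair_mk, min_eq_left (le_of_lt (m.ord k)),
      max_eq_right (le_of_lt (m.ord k))]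
  apply MergeEdgeSeq.ext'
  · funext k
    show sigT (fFun hn m) k = m.sig k
    have hσ := sig_eq_cpt m k
    rw [sigT, hep k]
    exact Prod.ext hσ.1.symm hσ.2.symm
  · funext k
    exact hep k

lemma right_inv (hn : 1 ≤ n) (T : LabeledTree n) : fFun hn (gFun T) = T := by
  apply LabeledTree.ext'
  funext k
  show s((epair (T.edge k)).1, (epair (T.edge k)).2) = T.edge k
  exact mk_epair _

end Stmt10


theorem stmt10 (n : ℕ) (hn : 1 ≤ n) :
    ∃ e : MergeEdgeSeq n ≃ LabeledTree n,
      ∀ (m : MergeEdgeSeq n) (k : Fin (n - 1)),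
        (e m).edge k = s((m.lam k).1, (m.lam k).2) := by
  exact ⟨⟨Stmt10.fFun hn, Stmt10.gFun, Stmt10.left_inv hn, Stmt10.right_inv hn⟩,
    fun m k => rfl⟩
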